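/- Let G_q be the distribution of an i.i.d. D_q-sequence truncated just after the first occurrence of the delimiter ♯. If u ~ G_q, then for any history h, e_q^h(c^h(u)) ~ G_q. -/

import Mathlib

open scoped Classical

/-- Bounding set reached from the full state space after reading the history `h`. -/
def wordOp {S A : Type} (op : Set S → A → Set S) (h : List A) : Set S :=
  h.foldl op Set.univ

/-- A letter is active after history `h` if it is the delimiter `♯` or changes the
bounding set `S ∘ h`. -/
def IsActive {S A : Type} (op : Set S → A → Set S) (sharp : A) (h : List A) (a : A) :
    Prop :=
  a = sharp ∨ op (wordOp op h) a ≠ wordOp op h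

/-- The `h`-contraction `c^h`: remove passive letters relative to the evolving
bounding set starting from `S ∘ h`. -/
noncomputable def contract {S A : Type} (op : Set S → A → Set S) (sharp : A) :
    List A → List A → List A
  | _, [] => []
  | h, a :: u =>
    if IsActive op sharp h a then a :: contract op sharp (h ++ [a]) u
    else contract op sharp h u
  termination_by h u => u.length

open MeasureTheory
open scoped Classical

/-- The distribution `D_q`: mass `q` on `♯`, mass `(1-q)·D(a)` otherwise. -/
noncomputable def DqFun {A : Type} (D : A → ENNReal) (sharp : A) (q : ENNReal)
    (a : A) : ENNReal :=
  if a = sharp then q else (1 - q) * D a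

/-- `G_q`: the law of an i.i.d. `D_q`-sequence truncated just after the first `♯`,
as a function assigning to each finite word its probability (its letters are i.i.d.
`D_q`, the word ends with its unique `♯`). -/
noncomputable def GqProb {A : Type} (Dq : A → ENNReal) (sharp : A) (w : List A) :
    ENNReal :=
  if w ≠ [] ∧ w.getLast? = some sharp ∧ sharp ∉ w.dropLast then (w.map Dq).prod
  else 0

/-- Total `D_q`-mass of the letters active after history `h`. -/
noncomputable def actProb {S A : Type} [Fintype A] (Dq : A → ENNReal)
    (op : Set S → A → Set S) (sharp : A) (h : List A) : ENNReal :=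
  ∑ a : A, if IsActive op sharp h a then Dq a else 0

/-- The transition kernel of the `(h,q)`-expansion: the probability that the
expansion of the (`h`-contracted) word `x` produces the word `w`.  Each inserted
passive letter `p` contributes `D_q(Inact)·D_q(p | Inact) = D_q(p)`, each emitted
(active) letter contributes the stopping probability `D_q(Act)` at its position;
`w` must contract back to `x` and must not end with inserted passive letters. -/
noncomputable def expandKernel {S A : Type} [Fintype A] (Dq : A → ENNReal)
    (op : Set S → A → Set S) (sharp : A) (h x w : List A) : ENNReal :=
  if contract op sharp h w = x ∧
      (w ≠ [] → IsActive op sharp (h ++ w.take (w.length - 1))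
        (w.getD (w.length - 1) sharp)) then
    ∏ i ∈ Finset.range w.length,
      if IsActive op sharp (h ++ w.take i) (w.getD i sharp) then
        actProb Dq op sharp (h ++ w.take i)
      else Dq (w.getD i sharp)
  else 0


namespace Stmt9
variable {S A : Type}


lemma wordOp_concat (op : Set S → A → Set S) (h : List A) (a : A) :
    wordOp op (h ++ [a]) = op (wordOp op h) a := by
  simp [wordOp, List.foldl_concat]

lemma isActive_congr (op : Set S → A → Set S) (sharp : A) {h h' : List A}
    (e : wordOp op h = wordOp op h') (a : A) :
    IsActive op sharp h a ↔ IsActive op sharp h' a := by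
  unfold IsActive; rw [e]

lemma wordOp_passive (op : Set S → A → Set S) (sharp : A) {h : List A} {a : A}
    (hp : ¬ IsActive op sharp h a) : wordOp op (h ++ [a]) = wordOp op h := by
  unfold IsActive at hp
  push_neg at hp
  rw [wordOp_concat]
  exact hp.2

lemma contract_nil (op : Set S → A → Set S) (sharp : A) (h : List A) :
    contract op sharp h [] = [] := by simp [contract]

lemma contract_cons (op : Set S → A → Set S) (sharp : A) (h : List A) (a : A) (u : List A) :
    contract op sharp h (a :: u) =
      if IsActive op sharp h a then a :: contract op sharp (h ++ [a]) u
      else contract op sharp h u := by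
  rw [contract]

lemma contract_congr (op : Set S → A → Set S) (sharp : A) :
    ∀ (u : List A) {h h' : List A}, wordOp op h = wordOp op h' →
      contract op sharp h u = contract op sharp h' u
  | [], h, h', e => by simp [contract_nil]
  | a :: u, h, h', e => by
    rw [contract_cons, contract_cons]
    by_cases ha : IsActive op sharp h a
    · rw [if_pos ha, if_pos ((isActive_congr op sharp e a).mp ha)]
      exact congrArg _ (contract_congr op sharp u
        (by rw [wordOp_concat, wordOp_concat]; exact congrArg (fun s => op s a) e))
    · rw [if_neg ha, if_neg (fun hb => ha ((isActive_congr op sharp e a).mpr hb)),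
        contract_congr op sharp u e]

lemma sharp_mem_contract (op : Set S → A → Set S) (sharp : A) :
    ∀ (u : List A) (h : List A), sharp ∈ u → sharp ∈ contract op sharp h u
  | [], h, hm => absurd hm List.not_mem_nil
  | a :: u, h, hm => by
    rw [contract_cons]
    by_cases ha : IsActive op sharp h a
    · rw [if_pos ha]
      rcases List.mem_cons.mp hm with rfl | hm'
      · exact List.mem_cons_self
      · exact List.mem_cons_of_mem _ (sharp_mem_contract op sharp u _ hm')
    · rw [if_neg ha]
      rcases List.mem_cons.mp hm with rfl | hm'
      · exact absurd (Or.inl rfl) ha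
      · exact sharp_mem_contract op sharp u h hm'


lemma GqProb_nil (Dq : A → ENNReal) (sharp : A) : GqProb Dq sharp [] = 0 := by
  simp [GqProb]

lemma GqProb_single_sharp (Dq : A → ENNReal) (sharp : A) :
    GqProb Dq sharp [sharp] = Dq sharp := by
  simp [GqProb]

lemma GqProb_cons (Dq : A → ENNReal) (sharp b : A) (hb : b ≠ sharp) (v : List A) :
    GqProb Dq sharp (b :: v) = Dq b * GqProb Dq sharp v := by
  cases v with
  | nil => simp [GqProb, hb]
  | cons c t =>
    have hcond : ((b :: c :: t) ≠ [] ∧ (b :: c :: t).getLast? = some sharp ∧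
          sharp ∉ (b :: c :: t).dropLast)
        ↔ ((c :: t) ≠ [] ∧ (c :: t).getLast? = some sharp ∧ sharp ∉ (c :: t).dropLast) := by
      simp [List.getLast?_cons_cons, List.dropLast_cons₂, Ne.symm hb]
    unfold GqProb
    by_cases hc : (c :: t) ≠ [] ∧ (c :: t).getLast? = some sharp ∧ sharp ∉ (c :: t).dropLast
    · rw [if_pos (hcond.mpr hc), if_pos hc]; simp
    · rw [if_neg (fun hx => hc (hcond.mp hx)), if_neg hc, mul_zero]

lemma GqProb_sharp_cons (Dq : A → ENNReal) (sharp : A) (v : List A) (hv : v ≠ []) :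
    GqProb Dq sharp (sharp :: v) = 0 := by
  obtain ⟨c, t, rfl⟩ := List.exists_cons_of_ne_nil hv
  simp [GqProb, List.dropLast_cons₂]

lemma GqProb_le_of_ne_zero {Dq : A → ENNReal} {sharp : A} {u : List A}
    (hu : GqProb Dq sharp u ≠ 0) :
    u ≠ [] ∧ u.getLast? = some sharp ∧ sharp ∉ u.dropLast := by
  by_contra hc
  exact hu (by unfold GqProb; rw [if_neg hc])

variable [Fintype A]

noncomputable def passProb (Dq : A → ENNReal) (op : Set S → A → Set S) (sharp : A)
    (h : List A) : ENNReal :=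
  ∑ a : A, if IsActive op sharp h a then 0 else Dq a

lemma actProb_le_one (Dq : A → ENNReal) (hsum : ∑ a, Dq a = 1)
    (op : Set S → A → Set S) (sharp : A) (h : List A) :
    actProb Dq op sharp h ≤ 1 := by
  rw [← hsum]; unfold actProb
  exact Finset.sum_le_sum fun a _ => by split_ifs <;> simp

lemma passProb_le_one (Dq : A → ENNReal) (hsum : ∑ a, Dq a = 1)
    (op : Set S → A → Set S) (sharp : A) (h : List A) :
    passProb Dq op sharp h ≤ 1 := by
  rw [← hsum]; unfold passProb
  exact Finset.sum_le_sum fun a _ => by split_ifs <;> simp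

lemma sharp_le_actProb (Dq : A → ENNReal) (op : Set S → A → Set S) (sharp : A)
    (h : List A) : Dq sharp ≤ actProb Dq op sharp h := by
  unfold actProb
  have := Finset.single_le_sum (f := fun a => if IsActive op sharp h a then Dq a else 0)
    (fun i _ => zero_le) (Finset.mem_univ sharp)
  simpa [IsActive] using this

lemma act_add_pass (Dq : A → ENNReal) (op : Set S → A → Set S) (sharp : A)
    (h : List A) (hsum : ∑ a, Dq a = 1) :
    actProb Dq op sharp h + passProb Dq op sharp h = 1 := by
  rw [← hsum]; unfold actProb passProb
  rw [← Finset.sum_add_distrib]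
  exact Finset.sum_congr rfl fun a _ => by split_ifs <;> simp

lemma actProb_congr (Dq : A → ENNReal) (op : Set S → A → Set S) (sharp : A)
    {h h' : List A} (e : wordOp op h = wordOp op h') :
    actProb Dq op sharp h = actProb Dq op sharp h' := by
  unfold actProb
  exact Finset.sum_congr rfl fun a _ => by rw [if_congr (isActive_congr op sharp e a) rfl rfl]

/-- `T(h,y) = ∑_{u : c^h(u) = y} G_q(u)`. -/
noncomputable def Tsum (Dq : A → ENNReal) (op : Set S → A → Set S) (sharp : A)
    (h y : List A) : ENNReal :=
  ∑' u : List A, if contract op sharp h u = y then GqProb Dq sharp u else 0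

lemma Tsum_congr (Dq : A → ENNReal) (op : Set S → A → Set S) (sharp : A)
    {h h' : List A} (e : wordOp op h = wordOp op h') (y : List A) :
    Tsum Dq op sharp h y = Tsum Dq op sharp h' y := by
  unfold Tsum
  exact tsum_congr fun u => by rw [contract_congr op sharp u e]

lemma Tsum_nil (Dq : A → ENNReal) (op : Set S → A → Set S) (sharp : A) (h : List A) :
    Tsum Dq op sharp h [] = 0 := by
  have hz : ∀ u : List A,
      (if contract op sharp h u = [] then GqProb Dq sharp u else 0) = 0 := by
    intro u
    split_ifs with hc
    · by_contra hne
      obtain ⟨h1, h2, h3⟩ := GqProb_le_of_ne_zero hne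
      have := sharp_mem_contract op sharp u h (List.mem_of_getLast? h2)
      rw [hc] at this
      exact List.not_mem_nil this
    · rfl
  simp only [Tsum, hz, tsum_zero]

/-- The product appearing in `expandKernel`. -/
noncomputable def Pprod (Dq : A → ENNReal) (op : Set S → A → Set S) (sharp : A)
    (h w : List A) : ENNReal :=
  ∏ i ∈ Finset.range w.length,
    if IsActive op sharp (h ++ w.take i) (w.getD i sharp) then
      actProb Dq op sharp (h ++ w.take i)
    else Dq (w.getD i sharp)

lemma Pprod_nil (Dq : A → ENNReal) (op : Set S → A → Set S) (sharp : A) (h : List A) :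
    Pprod Dq op sharp h [] = 1 := by simp [Pprod]

lemma Pprod_cons (Dq : A → ENNReal) (op : Set S → A → Set S) (sharp : A)
    (h : List A) (b : A) (w : List A) :
    Pprod Dq op sharp h (b :: w) =
      (if IsActive op sharp h b then actProb Dq op sharp h else Dq b) *
        Pprod Dq op sharp (h ++ [b]) w := by
  unfold Pprod
  rw [List.length_cons, Finset.prod_range_succ', mul_comm]
  congr 1
  · simp
  · exact Finset.prod_congr rfl fun i _ => by
      rw [List.take_succ_cons, List.getD_cons_succ, List.append_cons]

lemma tsum_list_prod (f : A → ENNReal) :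
    ∑' l : List A, (l.map f).prod = ∑' n : ℕ, (∑ a, f a) ^ n := by
  rw [← (List.equivSigmaTuple (α := A)).symm.tsum_eq (fun l => (l.map f).prod)]
  have h1 : ∀ p : (n : ℕ) × (Fin n → A),
      (((List.equivSigmaTuple (α := A)).symm p).map f).prod = ∏ i, f (p.2 i) := by
    rintro ⟨n, t⟩
    simp [List.equivSigmaTuple, List.map_ofFn, List.prod_ofFn, Function.comp]
  calc ∑' p : (n : ℕ) × (Fin n → A), (((List.equivSigmaTuple (α := A)).symm p).map f).prod
      = ∑' (n : ℕ) (t : Fin n → A), ∏ i, f (t i) := by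
        rw [tsum_congr h1]
        exact ENNReal.tsum_sigma (β := fun n => Fin n → A) (fun n t => ∏ i, f (t i))
    _ = ∑' n : ℕ, (∑ a, f a) ^ n := by
        refine tsum_congr fun n => ?_
        rw [tsum_fintype]
        have := Finset.prod_univ_sum (fun _ : Fin n => (Finset.univ : Finset A))
          (fun _ a => f a)
        rw [Fintype.piFinset_univ] at this
        rw [← this, Finset.prod_const, Finset.card_univ, Fintype.card_fin]

lemma tsum_GqProb (Dq : A → ENNReal) (sharp : A) (q : ENNReal)
    (hq : Dq sharp = q) (hq0 : q ≠ 0) (hq1 : q ≤ 1)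
    (hrest : ∑ a, (if a = sharp then 0 else Dq a) = 1 - q) :
    ∑' w : List A, GqProb Dq sharp w = 1 := by
  have hinj : Function.Injective (fun v : List A => v ++ [sharp]) := by
    intro v w hvw
    simpa using hvw
  have hsupp : Function.support (GqProb Dq sharp) ⊆
      Set.range (fun v : List A => v ++ [sharp]) := by
    intro u hu
    obtain ⟨h1, h2, h3⟩ := GqProb_le_of_ne_zero hu
    refine ⟨u.dropLast, ?_⟩
    have hL : u.getLast h1 = sharp := by
      have := List.getLast?_eq_getLast h1
      rw [this] at h2
      exact Option.some_injective _ h2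
    rw [← hL]
    exact List.dropLast_append_getLast h1
  rw [← hinj.tsum_eq hsupp]
  have hval : ∀ v : List A,
      GqProb Dq sharp (v ++ [sharp])
        = (v.map (fun a => if a = sharp then 0 else Dq a)).prod * q := by
    intro v
    by_cases hv : sharp ∈ v
    · have h0 : (0 : ENNReal) ∈ v.map (fun a => if a = sharp then 0 else Dq a) := by
        exact List.mem_map.mpr ⟨sharp, hv, by simp⟩
      rw [List.prod_eq_zero h0, zero_mul]
      unfold GqProb
      rw [if_neg]
      rintro ⟨-, -, h3⟩
      rw [List.dropLast_concat] at h3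
      exact h3 hv
    · unfold GqProb
      rw [if_pos ⟨by simp, List.getLast?_concat, by rwa [List.dropLast_concat]⟩]
      rw [List.map_append, List.prod_append]
      have : v.map Dq = v.map (fun a => if a = sharp then 0 else Dq a) := by
        refine List.map_congr_left fun a ha => ?_
        refine (if_neg fun e => hv ?_).symm
        rwa [e] at ha
      rw [this]
      simp [hq]
  rw [tsum_congr hval, ENNReal.tsum_mul_right, tsum_list_prod, hrest,
    ENNReal.tsum_geometric, ENNReal.sub_sub_cancel ENNReal.one_ne_top hq1,
    ENNReal.inv_mul_cancel hq0 (hq1.trans_lt ENNReal.one_lt_top).ne]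

lemma Tsum_le_one (Dq : A → ENNReal) (op : Set S → A → Set S) (sharp : A)
    (q : ENNReal) (hq : Dq sharp = q) (hq0 : q ≠ 0) (hq1 : q ≤ 1)
    (hrest : ∑ a, (if a = sharp then 0 else Dq a) = 1 - q) (h y : List A) :
    Tsum Dq op sharp h y ≤ 1 := by
  unfold Tsum
  refine le_trans ?_ (le_of_eq (tsum_GqProb Dq sharp q hq hq0 hq1 hrest))
  exact ENNReal.tsum_le_tsum fun u => by split_ifs <;> simp

noncomputable def Aterm (Dq : A → ENNReal) (op : Set S → A → Set S) (sharp : A)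
    (h : List A) (a : A) : List A → ENNReal
  | [] => 0
  | b :: x =>
    if b = a then
      Dq a * (if a = sharp then (if x = [] then 1 else 0)
        else Tsum Dq op sharp (h ++ [a]) x)
    else 0

noncomputable def Cterm (Dq : A → ENNReal) (op : Set S → A → Set S) (sharp : A)
    (h : List A) : List A → ENNReal
  | [] => 0
  | b :: x =>
    if IsActive op sharp h b then
      Dq b * (if b = sharp then (if x = [] then 1 else 0)
        else Tsum Dq op sharp (h ++ [b]) x)
    else 0

lemma tsum_cons_eval (Dq : A → ENNReal) (op : Set S → A → Set S) (sharp : A)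
    (h y : List A) (a : A) :
    (∑' v : List A, if contract op sharp h (a :: v) = y then GqProb Dq sharp (a :: v) else 0)
      = if IsActive op sharp h a then Aterm Dq op sharp h a y
        else Dq a * Tsum Dq op sharp h y := by
  by_cases ha : IsActive op sharp h a
  · rw [if_pos ha]
    by_cases has : a = sharp
    · subst has
      rw [tsum_eq_single ([] : List A)
        (fun v hv => by simp [GqProb_sharp_cons Dq a v hv])]
      rw [contract_cons, if_pos ha, contract_nil, GqProb_single_sharp]
      cases y with
      | nil => simp [Aterm]
      | cons b x =>
        by_cases hb : b = a
        · subst hb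
          by_cases hx : x = []
          · subst hx; simp [Aterm]
          · simp [Aterm, hx]
        · simp [Aterm, hb, Ne.symm hb]
    · have hG : ∀ v, GqProb Dq sharp (a :: v) = Dq a * GqProb Dq sharp v :=
        GqProb_cons Dq sharp a has
      cases y with
      | nil =>
        have hz : ∀ v : List A,
            (if contract op sharp h (a :: v) = ([] : List A)
              then GqProb Dq sharp (a :: v) else 0) = 0 := by
          intro v
          rw [contract_cons, if_pos ha]
          simp
        rw [tsum_congr hz, tsum_zero]
        simp [Aterm]
      | cons b x =>
        simp only [Aterm]
        by_cases hba : b = a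
        · subst hba
          rw [if_pos rfl, if_neg has]
          have hterm : ∀ v : List A,
              (if contract op sharp h (b :: v) = b :: x then GqProb Dq sharp (b :: v) else 0)
                = Dq b * (if contract op sharp (h ++ [b]) v = x
                    then GqProb Dq sharp v else 0) := by
            intro v
            rw [contract_cons, if_pos ha, hG v]
            by_cases hc : contract op sharp (h ++ [b]) v = x
            · rw [if_pos (by rw [hc]), if_pos hc]
            · rw [if_neg (fun hx => hc (by injection hx)), if_neg hc, mul_zero]
          rw [tsum_congr hterm, ENNReal.tsum_mul_left]
          rfl
        · rw [if_neg hba]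
          have hz : ∀ v : List A,
              (if contract op sharp h (a :: v) = b :: x
                then GqProb Dq sharp (a :: v) else 0) = 0 := by
            intro v
            rw [contract_cons, if_pos ha,
              if_neg (fun hx => hba (by injection hx with h1 h2; exact h1.symm))]
          rw [tsum_congr hz, tsum_zero]
  · rw [if_neg ha]
    have has : a ≠ sharp := fun e => ha (Or.inl e)
    have hterm : ∀ v : List A,
        (if contract op sharp h (a :: v) = y then GqProb Dq sharp (a :: v) else 0)
          = Dq a * (if contract op sharp h v = y then GqProb Dq sharp v else 0) := by
      intro v
      rw [contract_cons, if_neg ha, GqProb_cons Dq sharp a has v, mul_ite, mul_zero]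
    rw [tsum_congr hterm, ENNReal.tsum_mul_left]
    rfl

lemma Tsum_rec (Dq : A → ENNReal) (op : Set S → A → Set S) (sharp : A) (h y : List A) :
    Tsum Dq op sharp h y
      = passProb Dq op sharp h * Tsum Dq op sharp h y + Cterm Dq op sharp h y := by
  have hinj : Function.Injective (fun p : A × List A => p.1 :: p.2) := by
    rintro ⟨a, v⟩ ⟨b, w⟩ hp
    simp only [List.cons.injEq] at hp
    exact Prod.ext hp.1 hp.2
  have hsupp : Function.support
      (fun u : List A => if contract op sharp h u = y then GqProb Dq sharp u else 0)
        ⊆ Set.range (fun p : A × List A => p.1 :: p.2) := by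
    intro u hu
    cases u with
    | nil =>
      exfalso
      apply hu
      simp [GqProb_nil]
    | cons a v => exact ⟨(a, v), rfl⟩
  calc Tsum Dq op sharp h y
      = ∑' p : A × List A,
          (if contract op sharp h (p.1 :: p.2) = y then GqProb Dq sharp (p.1 :: p.2) else 0) :=
        (hinj.tsum_eq hsupp).symm
    _ = ∑' (a : A) (v : List A),
          (if contract op sharp h (a :: v) = y then GqProb Dq sharp (a :: v) else 0) :=
        ENNReal.tsum_prod
          (f := fun a v => if contract op sharp h (a :: v) = y then GqProb Dq sharp (a :: v) else 0)
    _ = ∑ a : A, ∑' v : List A,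
          (if contract op sharp h (a :: v) = y then GqProb Dq sharp (a :: v) else 0) :=
        tsum_fintype _
    _ = ∑ a : A, (if IsActive op sharp h a then Aterm Dq op sharp h a y
          else Dq a * Tsum Dq op sharp h y) :=
        Finset.sum_congr rfl fun a _ => tsum_cons_eval Dq op sharp h y a
    _ = ∑ a : A, ((if IsActive op sharp h a then 0 else Dq a) * Tsum Dq op sharp h y
          + (if IsActive op sharp h a then Aterm Dq op sharp h a y else 0)) :=
        Finset.sum_congr rfl fun a _ => by split_ifs <;> simp
    _ = (∑ a : A, (if IsActive op sharp h a then 0 else Dq a) * Tsum Dq op sharp h y)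
          + ∑ a : A, (if IsActive op sharp h a then Aterm Dq op sharp h a y else 0) :=
        Finset.sum_add_distrib
    _ = passProb Dq op sharp h * Tsum Dq op sharp h y + Cterm Dq op sharp h y := by
        refine congrArg₂ (· + ·) ?_ ?_
        · rw [← Finset.sum_mul]; rfl
        · cases y with
          | nil => simp [Aterm, Cterm]
          | cons b x =>
            rw [Finset.sum_eq_single_of_mem b (Finset.mem_univ b) ?_]
            · simp [Aterm, Cterm]
            · intro c _ hcb
              have hA : Aterm Dq op sharp h c (b :: x) = 0 := by
                simp only [Aterm]
                rw [if_neg (fun e => hcb e.symm)]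
              rw [hA, ite_self]

lemma act_mul_Tsum (Dq : A → ENNReal) (op : Set S → A → Set S) (sharp : A)
    (q : ENNReal) (hq : Dq sharp = q) (hq0 : q ≠ 0) (hq1 : q ≤ 1)
    (hsum : ∑ a, Dq a = 1)
    (hrest : ∑ a, (if a = sharp then 0 else Dq a) = 1 - q) (h y : List A) :
    actProb Dq op sharp h * Tsum Dq op sharp h y = Cterm Dq op sharp h y := by
  have hT1 := Tsum_le_one Dq op sharp q hq hq0 hq1 hrest h y
  have hTne : Tsum Dq op sharp h y ≠ ⊤ := (hT1.trans_lt ENNReal.one_lt_top).ne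
  have hp1 := passProb_le_one Dq hsum op sharp h
  have hpne : passProb Dq op sharp h ≠ ⊤ := (hp1.trans_lt ENNReal.one_lt_top).ne
  have hact : actProb Dq op sharp h = 1 - passProb Dq op sharp h :=
    ENNReal.eq_sub_of_add_eq hpne (act_add_pass Dq op sharp h hsum)
  have hmulne : passProb Dq op sharp h * Tsum Dq op sharp h y ≠ ⊤ :=
    ((mul_le_one' hp1 hT1).trans_lt ENNReal.one_lt_top).ne
  rw [hact, ENNReal.sub_mul (fun _ _ => hTne), one_mul]
  conv_lhs => lhs; rw [Tsum_rec Dq op sharp h y]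
  rw [add_comm, ENNReal.add_sub_cancel_right hmulne]

lemma LC_cons (op : Set S → A → Set S) (sharp : A) (h : List A) (b : A) (w' : List A)
    (hw' : w' ≠ [])
    (hLC : (b :: w') ≠ [] → IsActive op sharp (h ++ (b :: w').take ((b :: w').length - 1))
        ((b :: w').getD ((b :: w').length - 1) sharp)) :
    IsActive op sharp ((h ++ [b]) ++ w'.take (w'.length - 1))
      (w'.getD (w'.length - 1) sharp) := by
  obtain ⟨c, t, rfl⟩ := List.exists_cons_of_ne_nil hw'
  have h1 := hLC (by simp)
  simpa [List.append_assoc] using h1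

lemma contract_ne_nil (op : Set S → A → Set S) (sharp : A) :
    ∀ (w : List A) (h : List A), w ≠ [] →
      IsActive op sharp (h ++ w.take (w.length - 1)) (w.getD (w.length - 1) sharp) →
      contract op sharp h w ≠ []
  | [], h, hw, _ => absurd rfl hw
  | b :: w', h, _, hLA => by
    rw [contract_cons]
    by_cases hb : IsActive op sharp h b
    · rw [if_pos hb]; exact List.cons_ne_nil _ _
    · rw [if_neg hb]
      cases w' with
      | nil =>
        exact absurd (by simpa using hLA) hb
      | cons c t =>
        have hLA' : IsActive op sharp ((h ++ [b]) ++ (c :: t).take ((c :: t).length - 1))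
            ((c :: t).getD ((c :: t).length - 1) sharp) := by
          simpa [List.append_assoc] using hLA
        have hcc : contract op sharp h (c :: t) = contract op sharp (h ++ [b]) (c :: t) :=
          contract_congr op sharp _ (wordOp_passive op sharp hb).symm
        rw [hcc]
        exact contract_ne_nil op sharp (c :: t) (h ++ [b]) (List.cons_ne_nil _ _) hLA'

omit [Fintype A] in
lemma GqProb_eq_zero_of_lastPassive (Dq : A → ENNReal) (op : Set S → A → Set S)
    (sharp : A) {h w : List A} (hw : w ≠ [])
    (hpas : ¬ IsActive op sharp (h ++ w.take (w.length - 1)) (w.getD (w.length - 1) sharp)) :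
    GqProb Dq sharp w = 0 := by
  have hne : w.getD (w.length - 1) sharp ≠ sharp := fun e => hpas (Or.inl e)
  unfold GqProb
  rw [if_neg]
  rintro ⟨-, hlast, -⟩
  apply hne
  have hlt : w.length - 1 < w.length := Nat.sub_lt (List.length_pos_iff.mpr hw) Nat.one_pos
  rw [List.getD_eq_getElem _ _ hlt]
  rw [List.getLast?_eq_getLast hw] at hlast
  have h2 := Option.some_injective _ hlast
  rw [← h2, List.getLast_eq_getElem]

lemma main_claim (Dq : A → ENNReal) (op : Set S → A → Set S) (sharp : A)
    (q : ENNReal) (hq : Dq sharp = q) (hq0 : q ≠ 0) (hq1 : q ≤ 1)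
    (hsum : ∑ a, Dq a = 1)
    (hrest : ∑ a, (if a = sharp then 0 else Dq a) = 1 - q) :
    ∀ (w h : List A),
      ((w ≠ []) → IsActive op sharp (h ++ w.take (w.length - 1)) (w.getD (w.length - 1) sharp)) →
      Tsum Dq op sharp h (contract op sharp h w) * Pprod Dq op sharp h w
        = GqProb Dq sharp w := by
  intro w
  induction w with
  | nil =>
    intro h _
    rw [contract_nil, Tsum_nil, zero_mul, GqProb_nil]
  | cons b w' ih =>
    intro h hLC
    rw [contract_cons, Pprod_cons]
    by_cases hb : IsActive op sharp h b
    · rw [if_pos hb, if_pos hb, ← mul_assoc,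
        mul_comm (Tsum Dq op sharp h (b :: contract op sharp (h ++ [b]) w'))
          (actProb Dq op sharp h),
        act_mul_Tsum Dq op sharp q hq hq0 hq1 hsum hrest]
      simp only [Cterm, if_pos hb]
      by_cases hbs : b = sharp
      · subst hbs
        rw [if_pos rfl]
        cases w' with
        | nil =>
          rw [contract_nil, if_pos rfl, Pprod_nil, GqProb_single_sharp]
          ring
        | cons c t =>
          have hLC' := LC_cons op b h b (c :: t) (List.cons_ne_nil _ _) hLC
          have hx := contract_ne_nil op b (c :: t) (h ++ [b]) (List.cons_ne_nil _ _) hLC'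
          rw [if_neg hx, mul_zero, zero_mul,
            GqProb_sharp_cons Dq b (c :: t) (List.cons_ne_nil _ _)]
      · rw [if_neg hbs, GqProb_cons Dq sharp b hbs w', mul_assoc]
        congr 1
        cases w' with
        | nil =>
          rw [contract_nil, Tsum_nil, zero_mul, GqProb_nil]
        | cons c t =>
          exact ih (h ++ [b])
            (fun _ => LC_cons op sharp h b (c :: t) (List.cons_ne_nil _ _) hLC)
    · rw [if_neg hb, if_neg hb]
      have hb' : b ≠ sharp := fun e => hb (Or.inl e)
      have hwp : wordOp op h = wordOp op (h ++ [b]) := (wordOp_passive op sharp hb).symm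
      cases w' with
      | nil =>
        exact absurd (by simpa using hLC (List.cons_ne_nil _ _)) hb
      | cons c t =>
        rw [contract_congr op sharp (c :: t) hwp, Tsum_congr Dq op sharp hwp,
          GqProb_cons Dq sharp b hb' (c :: t)]
        have hih := ih (h ++ [b])
          (fun _ => LC_cons op sharp h b (c :: t) (List.cons_ne_nil _ _) hLC)
        rw [← hih]
        ring

end Stmt9

/-- if `U ~ G_q` and `V` is the `(h,q)`-expansion of the `h`-contraction
of `U`, then `V ~ G_q`. -/
theorem stmt9 {S A : Type} [Fintype A] (op : Set S → A → Set S) (sharp : A)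
    (D : A → ENNReal) (hDsharp : D sharp = 0) (hDsum : ∑ a, D a = 1)
    (q : ENNReal) (hq0 : 0 < q) (hq1 : q ≤ 1) (h : List A)
    {Ω : Type} [MeasurableSpace Ω] (μ : Measure Ω) [IsProbabilityMeasure μ]
    (U V : Ω → List A)
    (hjoint : ∀ u w : List A,
      μ {ω | U ω = u ∧ V ω = w}
        = GqProb (DqFun D sharp q) sharp u *
            expandKernel (DqFun D sharp q) op sharp h (contract op sharp h u) w) :
    ∀ w : List A, μ {ω | V ω = w} = GqProb (DqFun D sharp q) sharp w := by
  intro w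
  have hDqsharp : DqFun D sharp q sharp = q := by simp [DqFun]
  set Dq := DqFun D sharp q with hDq
  have hq0' : q ≠ 0 := hq0.ne'
  have hrest : ∑ a, (if a = sharp then 0 else Dq a) = 1 - q := by
    have h1 : ∀ a : A, (if a = sharp then 0 else Dq a) = (1 - q) * D a := by
      intro a
      by_cases ha : a = sharp
      · subst ha; simp [hDsharp]
      · simp [hDq, DqFun, ha]
    rw [Finset.sum_congr rfl fun a _ => h1 a, ← Finset.mul_sum, hDsum, mul_one]
  have hsum : ∑ a, Dq a = 1 := by
    have h1 : ∀ a : A,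
        Dq a = (if a = sharp then q else 0) + (if a = sharp then 0 else Dq a) := by
      intro a
      by_cases ha : a = sharp
      · subst ha; simp [hDq, DqFun]
      · simp [ha]
    rw [Finset.sum_congr rfl fun a _ => h1 a, Finset.sum_add_distrib,
      Finset.sum_ite_eq' Finset.univ sharp fun _ => q, if_pos (Finset.mem_univ sharp),
      hrest, add_tsub_cancel_of_le hq1]
  have hGq1 : ∑' u : List A, GqProb Dq sharp u = 1 :=
    Stmt9.tsum_GqProb Dq sharp q hDqsharp hq0' hq1 hrest
  have hker : ∀ w' : List A,
      (∑' u : List A,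
          GqProb Dq sharp u * expandKernel Dq op sharp h (contract op sharp h u) w')
        = GqProb Dq sharp w' := by
    intro w'
    by_cases hLC : (w' ≠ [] → IsActive op sharp (h ++ w'.take (w'.length - 1))
        (w'.getD (w'.length - 1) sharp))
    · have hpt : ∀ u : List A,
          GqProb Dq sharp u * expandKernel Dq op sharp h (contract op sharp h u) w'
            = (if contract op sharp h u = contract op sharp h w'
                then GqProb Dq sharp u else 0) * Stmt9.Pprod Dq op sharp h w' := by
        intro u
        unfold expandKernel
        by_cases hc : contract op sharp h w' = contract op sharp h u
        · rw [if_pos ⟨hc, hLC⟩, if_pos hc.symm]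
          rfl
        · rw [if_neg (fun hx => hc hx.1), if_neg (fun hx => hc hx.symm), mul_zero, zero_mul]
      rw [tsum_congr hpt, ENNReal.tsum_mul_right]
      exact Stmt9.main_claim Dq op sharp q hDqsharp hq0' hq1 hsum hrest w' h hLC
    · push_neg at hLC
      have hpt : ∀ u : List A,
          GqProb Dq sharp u * expandKernel Dq op sharp h (contract op sharp h u) w' = 0 := by
        intro u
        unfold expandKernel
        rw [if_neg, mul_zero]
        rintro ⟨-, h2⟩
        exact hLC.2 (h2 hLC.1)
      rw [tsum_congr hpt, tsum_zero,
        Stmt9.GqProb_eq_zero_of_lastPassive Dq op sharp hLC.1 hLC.2]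
  have hub : ∀ w' : List A, μ {ω | V ω = w'} ≤ GqProb Dq sharp w' := by
    intro w'
    have hsub : {ω | V ω = w'} ⊆ ⋃ u : List A, {ω | U ω = u ∧ V ω = w'} :=
      fun ω hω => Set.mem_iUnion.mpr ⟨U ω, rfl, hω⟩
    calc μ {ω | V ω = w'} ≤ μ (⋃ u : List A, {ω | U ω = u ∧ V ω = w'}) :=
          measure_mono hsub
      _ ≤ ∑' u : List A, μ {ω | U ω = u ∧ V ω = w'} := measure_iUnion_le _
      _ = ∑' u : List A,
            GqProb Dq sharp u * expandKernel Dq op sharp h (contract op sharp h u) w' :=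
          tsum_congr fun u => hjoint u w'
      _ = GqProb Dq sharp w' := hker w'
  have hlow : (1 : ENNReal) ≤ ∑' w' : List A, μ {ω | V ω = w'} := by
    have hsub : (Set.univ : Set Ω) ⊆ ⋃ w' : List A, {ω | V ω = w'} :=
      fun ω _ => Set.mem_iUnion.mpr ⟨V ω, rfl⟩
    calc (1 : ENNReal) = μ Set.univ := measure_univ.symm
      _ ≤ μ (⋃ w' : List A, {ω | V ω = w'}) := measure_mono hsub
      _ ≤ ∑' w' : List A, μ {ω | V ω = w'} := measure_iUnion_le _
  refine le_antisymm (hub w) ?_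
  have hGle1 : GqProb Dq sharp w ≤ 1 := by
    rw [← hGq1]; exact ENNReal.le_tsum w
  have hsplitG : ∑' w' : List A, GqProb Dq sharp w'
      = GqProb Dq sharp w + ∑' w' : List A, @ite ENNReal (w' = w) (Classical.propDecidable _) 0 (GqProb Dq sharp w') :=
    ENNReal.tsum_eq_add_tsum_ite w
  have hrest1 : ∑' w' : List A, @ite ENNReal (w' = w) (Classical.propDecidable _) 0 (GqProb Dq sharp w')
      = 1 - GqProb Dq sharp w := by
    apply ENNReal.eq_sub_of_add_eq (hGle1.trans_lt ENNReal.one_lt_top).ne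
    rw [add_comm, ← hsplitG, hGq1]
  have h1 : (1 : ENNReal) ≤ μ {ω | V ω = w} + (1 - GqProb Dq sharp w) := by
    calc (1 : ENNReal) ≤ ∑' w' : List A, μ {ω | V ω = w'} := hlow
      _ = μ {ω | V ω = w} + ∑' w' : List A, @ite ENNReal (w' = w) (Classical.propDecidable _) 0 (μ {ω | V ω = w'}) :=
          ENNReal.tsum_eq_add_tsum_ite w
      _ ≤ μ {ω | V ω = w} + (1 - GqProb Dq sharp w) := by
          refine add_le_add le_rfl ?_
          rw [← hrest1]
          refine ENNReal.tsum_le_tsum fun w' => ?_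
          split_ifs
          · exact le_rfl
          · exact hub w'
  have h2 : 1 - (1 - GqProb Dq sharp w) ≤ μ {ω | V ω = w} := by
    rw [tsub_le_iff_right]
    exact h1
  rwa [ENNReal.sub_sub_cancel ENNReal.one_ne_top hGle1] at h2
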